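/- Let f(x) = Ax + φ(e₁ᵀx)·b be a continuous piecewise linear vector field in Lure form, where φ is continuous piecewise linear with outer slopes α₀ (for σ ≤ τ₁) and α_p (for σ ≥ τ_p), and let A₀ = A + α₀ b e₁ᵀ, A_p = A + α_p b e₁ᵀ. The projected vector field g(z) = (I − π(z)π(z)ᵀ ; −z_{n+1}π(z)ᵀ)·(A π(z) + z_{n+1} φ(z₁/z_{n+1}) b), extended to the equator, is identically zero on the equator if and only if A₀ = λ₀ I and A_p = λ_p I for some scalars λ₀, λ_p. -/

import Mathlib

open Matrix

private lemma scalar_of_eigen (m : ℕ) (M : Matrix (Fin (m + 1)) (Fin (m + 1)) ℝ)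
    (h : ∀ u : EuclideanSpace ℝ (Fin (m + 1)), ‖u‖ = 1 → 0 < u 0 →
      ∀ k, M.mulVec u k = (u ⬝ᵥ M.mulVec u) * u k) :
    ∃ lam : ℝ, M = lam • (1 : Matrix (Fin (m + 1)) (Fin (m + 1)) ℝ) := by
  have hpar : ∀ w : EuclideanSpace ℝ (Fin (m + 1)), 0 < w 0 →
      ∃ c : ℝ, ∀ k, M.mulVec w k = c * w k := by
    intro w hw
    have hwne : w ≠ 0 := by
      intro h0; rw [h0] at hw; simp at hw
    have hr : ‖w‖ ≠ 0 := norm_ne_zero_iff.mpr hwne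
    set u : EuclideanSpace ℝ (Fin (m + 1)) := ‖w‖⁻¹ • w with hu
    have hnorm : ‖u‖ = 1 := by
      rw [hu, norm_smul]
      simp [abs_of_nonneg (norm_nonneg w), inv_mul_cancel₀ hr]
    have hu0 : 0 < u 0 := by
      have h1 : u 0 = ‖w‖⁻¹ * w 0 := rfl
      rw [h1]
      exact mul_pos (inv_pos.mpr (norm_pos_iff.mpr hwne)) hw
    obtain ⟨c, hc⟩ : ∃ c : ℝ, ∀ k, M.mulVec u k = c * u k := ⟨_, h u hnorm hu0⟩
    refine ⟨c, fun k => ?_⟩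
    have hk := hc k
    have hmv : M.mulVec u = ‖w‖⁻¹ • M.mulVec w := by
      rw [hu]; exact Matrix.mulVec_smul M _ _
    rw [hmv] at hk
    have huk : u k = ‖w‖⁻¹ * w k := rfl
    have hsm : (‖w‖⁻¹ • M.mulVec w) k = ‖w‖⁻¹ * M.mulVec w k := rfl
    rw [hsm, huk] at hk
    exact mul_left_cancel₀ (inv_ne_zero hr) (by rw [hk]; ring)
  -- column 0
  obtain ⟨c0, hc0⟩ := hpar (show EuclideanSpace ℝ (Fin (m + 1)) from WithLp.toLp 2 (Pi.single 0 1))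
    (by show (0:ℝ) < Pi.single (M := fun _ => ℝ) 0 1 0; simp)
  have col0 : ∀ k, M k 0 = c0 * (if k = 0 then (1:ℝ) else 0) := by
    intro k
    have hk := hc0 k
    rw [show M.mulVec (show EuclideanSpace ℝ (Fin (m + 1)) from WithLp.toLp 2 (Pi.single 0 1))
        = M.mulVec (Pi.single 0 1) from rfl, Matrix.mulVec_single] at hk
    simpa [Pi.single_apply] using hk
  -- generic combination
  have main : ∀ j : Fin (m + 1), j ≠ 0 → ∀ a : ℝ, ∃ c : ℝ, ∀ k,
      M k 0 + a * M k j = c * ((if k = 0 then (1:ℝ) else 0) + a * (if k = j then 1 else 0)) := by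
    intro j hj a
    set w : Fin (m + 1) → ℝ := (Pi.single 0 1 : Fin (m + 1) → ℝ) + a • (Pi.single j 1 : Fin (m + 1) → ℝ) with hw
    have hw0 : w 0 = 1 := by
      simp [hw, Pi.single_apply, Ne.symm hj]
    obtain ⟨c, hc⟩ := hpar (show EuclideanSpace ℝ (Fin (m + 1)) from WithLp.toLp 2 w)
      (by show (0:ℝ) < w 0; rw [hw0]; norm_num)
    refine ⟨c, fun k => ?_⟩
    have hk := hc k
    rw [show M.mulVec (show EuclideanSpace ℝ (Fin (m + 1)) from WithLp.toLp 2 w) = M.mulVec w from rfl,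
      hw, Matrix.mulVec_add, Matrix.mulVec_smul, Matrix.mulVec_single] at hk
    simpa [Pi.single_apply] using hk
  refine ⟨M 0 0, ?_⟩
  have hM00 : M 0 0 = c0 := by simpa using col0 0
  ext k j
  rcases eq_or_ne j 0 with rfl | hj
  · rcases eq_or_ne k 0 with rfl | hk
    · simp
    · have := col0 k
      simp [hk] at this
      simp [this, Matrix.one_apply, hk]
  · obtain ⟨cp, hcp⟩ := main j hj 1
    obtain ⟨cm, hcm⟩ := main j hj (-1)
    have hMj0 : M j 0 = 0 := by simpa [hj] using col0 j
    have hjp := hcp j; have hjm := hcm j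
    have h0p := hcp 0; have h0m := hcm 0
    simp [hj, Ne.symm hj, hMj0] at hjp hjm h0p h0m
    rcases eq_or_ne k j with rfl | hkj
    · simp [Matrix.one_apply]
      linarith
    · rcases eq_or_ne k 0 with rfl | hk0
      · simp [Matrix.one_apply, Ne.symm hj]
        linarith
      · have hck := hcp k
        have hck0 : M k 0 = 0 := by simpa [hk0] using col0 k
        simp [hk0, hkj, hck0] at hck
        simp [Matrix.one_apply, hkj, hck]

/-- for a continuous PWL field in Lure form `f(x) = Ax + φ(e₁ᵀx)b` with outer
matrices `A₀ = A + α₀be₁ᵀ`, `A_p = A + α_p be₁ᵀ`, the projected field extended to the equator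
(whose value at equator points with `z₁ > 0`, resp. `z₁ < 0`, is `((I − ππᵀ)A_p π(z), 0)`,
resp. with `A₀`) is identically zero on the equator iff `A₀ = λ₀I` and `A_p = λ_pI`. -/
theorem stmt_18 (n : ℕ)
    (E : Set (EuclideanSpace ℝ (Fin (n + 2))))
    (hE : E = {z : EuclideanSpace ℝ (Fin (n + 2)) | ‖z‖ = 1 ∧ z (Fin.last (n + 1)) = 0})
    (pr : EuclideanSpace ℝ (Fin (n + 2)) → EuclideanSpace ℝ (Fin (n + 1)))
    (hpr : ∀ z i, pr z i = z i.castSucc)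
    (A A₀ Ap : Matrix (Fin (n + 1)) (Fin (n + 1)) ℝ)
    (b : Fin (n + 1) → ℝ)
    (φ : ℝ → ℝ) (hφcont : Continuous φ)
    (τ₁ τp α₀ β₀ αp βp : ℝ) (hτ : τ₁ ≤ τp)
    (hφ₀ : ∀ σ : ℝ, σ ≤ τ₁ → φ σ = α₀ * σ + β₀)
    (hφp : ∀ σ : ℝ, τp ≤ σ → φ σ = αp * σ + βp)
    (f : EuclideanSpace ℝ (Fin (n + 1)) → EuclideanSpace ℝ (Fin (n + 1)))
    (hf : ∀ x, ∀ j : Fin (n + 1), f x j = A.mulVec x j + φ (x 0) * b j)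
    (hA₀ : A₀ = A + α₀ • Matrix.vecMulVec b (Pi.single 0 1))
    (hAp : Ap = A + αp • Matrix.vecMulVec b (Pi.single 0 1)) :
    ((∀ z ∈ E, 0 < z 0 → ∀ k : Fin (n + 1),
        Ap.mulVec (pr z) k - (pr z ⬝ᵥ Ap.mulVec (pr z)) * pr z k = 0) ∧
     (∀ z ∈ E, z 0 < 0 → ∀ k : Fin (n + 1),
        A₀.mulVec (pr z) k - (pr z ⬝ᵥ A₀.mulVec (pr z)) * pr z k = 0)) ↔
      ∃ lam₀ lamp : ℝ, A₀ = lam₀ • (1 : Matrix (Fin (n + 1)) (Fin (n + 1)) ℝ) ∧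
        Ap = lamp • (1 : Matrix (Fin (n + 1)) (Fin (n + 1)) ℝ) := by
  constructor
  · rintro ⟨hP, hN⟩
    -- build an equator point from a unit vector
    have build : ∀ u : EuclideanSpace ℝ (Fin (n + 1)), ‖u‖ = 1 →
        ∃ z ∈ E, pr z = u ∧ z 0 = u 0 := by
      intro u hu
      refine ⟨(WithLp.toLp 2 (fun j => Fin.lastCases (motive := fun _ : Fin (n + 2) => ℝ) 0 (fun i => u i) j) : EuclideanSpace ℝ (Fin (n + 2))),
        ?_, ?_, ?_⟩
      · rw [hE]
        constructor
        · rw [EuclideanSpace.norm_eq, Fin.sum_univ_castSucc]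
          rw [EuclideanSpace.norm_eq] at hu
          have hsum : ∀ i : Fin (n + 1),
              ‖Fin.lastCases (motive := fun _ : Fin (n + 2) => ℝ) 0 (fun i => u i) i.castSucc‖ ^ 2
                = ‖u i‖ ^ 2 := by
            intro i; rw [Fin.lastCases_castSucc]
          rw [Finset.sum_congr rfl fun i _ => hsum i]
          simpa using hu
        · show Fin.lastCases (motive := fun _ : Fin (n + 2) => ℝ) 0 (fun i => u i)
            (Fin.last (n + 1)) = 0
          exact Fin.lastCases_last
      · ext i
        rw [hpr]
        exact Fin.lastCases_castSucc (motive := fun _ : Fin (n + 2) => ℝ) i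
      · have := Fin.lastCases_castSucc (motive := fun _ : Fin (n + 2) => ℝ)
          (last := (0:ℝ)) (cast := fun i => u i) 0
        simpa using this
    have hApe : ∀ u : EuclideanSpace ℝ (Fin (n + 1)), ‖u‖ = 1 → 0 < u 0 →
        ∀ k, Ap.mulVec u k = (u ⬝ᵥ Ap.mulVec u) * u k := by
      intro u hu hu0 k
      obtain ⟨z, hzE, hprz, hz0⟩ := build u hu
      have := hP z hzE (by rw [hz0]; exact hu0) k
      rw [hprz] at this
      linarith
    have hA0e : ∀ u : EuclideanSpace ℝ (Fin (n + 1)), ‖u‖ = 1 → 0 < u 0 →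
        ∀ k, A₀.mulVec u k = (u ⬝ᵥ A₀.mulVec u) * u k := by
      intro u hu hu0 k
      obtain ⟨z, hzE, hprz, hz0⟩ := build (-u) (by rw [norm_neg]; exact hu)
      have hv : ∀ i, (-u : EuclideanSpace ℝ (Fin (n + 1))) i = -(u i) := fun i => rfl
      have := hN z hzE (by rw [hz0, hv]; linarith) k
      rw [hprz] at this
      have hmv : A₀.mulVec (-u : EuclideanSpace ℝ (Fin (n + 1))) = -(A₀.mulVec u) := by
        funext k'
        simp [Matrix.mulVec, dotProduct, hv, mul_neg]
      rw [hmv] at this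
      have hdp : ((-u : EuclideanSpace ℝ (Fin (n + 1))) ⬝ᵥ -(A₀.mulVec u))
          = u ⬝ᵥ A₀.mulVec u := by
        simp [dotProduct, hv]
      rw [hdp] at this
      have h1 : (-(A₀.mulVec u)) k = -(A₀.mulVec u k) := rfl
      have h2 := hv k
      rw [h1, h2] at this
      linarith
    obtain ⟨lam₀, h0⟩ := scalar_of_eigen n A₀ hA0e
    obtain ⟨lamp, hp⟩ := scalar_of_eigen n Ap hApe
    exact ⟨lam₀, lamp, h0, hp⟩
  · rintro ⟨lam₀, lamp, h0, hp⟩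
    have hdp : ∀ z ∈ E, pr z ⬝ᵥ pr z = 1 := by
      intro z hz
      rw [hE] at hz
      obtain ⟨hz1, hzl⟩ := hz
      rw [EuclideanSpace.norm_eq, Real.sqrt_eq_one] at hz1
      have h2 : ∑ j : Fin (n + 2), z j ^ 2 = 1 := by
        simpa [Real.norm_eq_abs, sq_abs] using hz1
      rw [Fin.sum_univ_castSucc, hzl] at h2
      simp at h2
      calc pr z ⬝ᵥ pr z = ∑ i : Fin (n + 1), z i.castSucc * z i.castSucc := by
            simp [dotProduct, hpr]
        _ = 1 := by simpa [pow_two] using h2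
    have gen : ∀ (M : Matrix (Fin (n + 1)) (Fin (n + 1)) ℝ) (lam : ℝ),
        M = lam • (1 : Matrix (Fin (n + 1)) (Fin (n + 1)) ℝ) → ∀ z ∈ E, ∀ k,
        M.mulVec (pr z) k - (pr z ⬝ᵥ M.mulVec (pr z)) * pr z k = 0 := by
      intro M lam hM z hz k
      rw [hM, Matrix.smul_mulVec, Matrix.one_mulVec]
      have h4 : (pr z ⬝ᵥ lam • pr z) = lam * (pr z ⬝ᵥ pr z) := by
        rw [dotProduct_smul, smul_eq_mul]
      rw [h4, hdp z hz]
      have h5 : (lam • (pr z).ofLp) k = lam * pr z k := rfl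
      rw [h5]; ring
    exact ⟨fun z hz _ k => gen Ap lamp hp z hz k, fun z hz _ k => gen A₀ lam₀ h0 z hz k⟩
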